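/- arXiv:2501.13527 — 3 statements merged into one kernel-verified Lean document; each statement's English description precedes it below -/
import Mathlib

section
/- For every infinite-dimensional Banach space X and every α ∈ (0,1], the α-Hölder extension constant λ_α(X, c₀) is at least κ(X)^α, where κ(X) is the Kottman constant of X. -/
open Set Filter
open scoped ENNReal NNReal

noncomputable section

/-- The Kottman constant of a normed space: the supremum of separation constants
`sep (xₙ) = inf_{n ≠ m} ‖xₙ - xₘ‖` over sequences `(xₙ)` in the closed unit ball. -/
def kottman (X : Type*) [SeminormedAddGroup X] : ℝ :=
  sSup {r : ℝ | ∃ x : ℕ → X, (∀ n, ‖x n‖ ≤ 1) ∧ ∀ n m, n ≠ m → r ≤ ‖x n - x m‖}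

/-- `f` is α-Hölder with constant `K` on the set `M` (real exponent, via `Real.rpow`). -/
def HolderOnR {X Y : Type*} [SeminormedAddGroup X] [SeminormedAddGroup Y]
    (K α : ℝ) (f : X → Y) (M : Set X) : Prop :=
  ∀ x ∈ M, ∀ y ∈ M, ‖f x - f y‖ ≤ K * ‖x - y‖ ^ α

/-- `f` is globally α-Hölder with constant `K`. -/
def HolderR {X Y : Type*} [SeminormedAddGroup X] [SeminormedAddGroup Y]
    (K α : ℝ) (f : X → Y) : Prop :=
  ∀ x y, ‖f x - f y‖ ≤ K * ‖x - y‖ ^ α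

/-- The α-Hölder extension property with constant `l`: every α-Hölder map from a subset
of `X` into `Y` extends to `X` with Hölder constant multiplied by at most `l`. -/
def ExtProp (l α : ℝ) (X Y : Type*) [SeminormedAddGroup X] [SeminormedAddGroup Y] : Prop :=
  ∀ (M : Set X) (f : X → Y) (K : ℝ), 0 ≤ K → HolderOnR K α f M →
    ∃ F : X → Y, Set.EqOn F f M ∧ ∃ K' : ℝ, 0 ≤ K' ∧ HolderR K' α F ∧ K' ≤ l * K

/-- `λ_α(X, Y)`: the optimal α-Hölder extension constant from subsets of `X` into `Y`
(`∞` if no finite constant works). -/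
def holderExt (α : ℝ) (X Y : Type*) [SeminormedAddGroup X] [SeminormedAddGroup Y] : ℝ≥0∞ :=
  sInf {L : ℝ≥0∞ | ∃ l : ℝ, 0 ≤ l ∧ L = ENNReal.ofReal l ∧ ExtProp l α X Y}

/-- The Banach space `c₀` of real null sequences with the sup norm. -/
abbrev czero : Type := ZeroAtInftyContinuousMap ℕ ℝ

/-- The canonical unit vector basis of `c₀`. -/
def e (n : ℕ) : czero where
  toFun := fun m => if m = n then 1 else 0
  continuous_toFun := continuous_of_discreteTopology
  zero_at_infty' := by
    rw [Filter.cocompact_eq_cofinite, Nat.cofinite_eq_atTop]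
    refine Tendsto.congr' ?_ tendsto_const_nhds
    filter_upwards [Filter.eventually_gt_atTop n] with m hm
    simp [Nat.ne_of_gt hm]


lemma czero_norm_apply_le (g : czero) (n : ℕ) : ‖g n‖ ≤ ‖g‖ := by
  rw [← ZeroAtInftyContinuousMap.norm_toBCF_eq_norm]
  exact g.toBCF.norm_coe_le_norm n

lemma czero_norm_le (g : czero) {C : ℝ} (hC : 0 ≤ C) (h : ∀ n, ‖g n‖ ≤ C) : ‖g‖ ≤ C := by
  rw [← ZeroAtInftyContinuousMap.norm_toBCF_eq_norm]
  exact BoundedContinuousFunction.norm_le hC |>.2 h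

lemma key_lemma {X : Type*} [NormedAddCommGroup X] [NormedSpace ℝ X]
    {α r l : ℝ} (hα0 : 0 < α) (hr : 0 < r) (hl : 0 ≤ l)
    (x : ℕ → X) (hx : ∀ n, ‖x n‖ ≤ 1) (hsep : ∀ n m, n ≠ m → r ≤ ‖x n - x m‖)
    (hExt : ExtProp l α X czero) : r ^ α ≤ l := by
  classical
  have hinj : Function.Injective x := by
    intro n m hnm
    by_contra h
    have := hsep n m h
    rw [hnm, sub_self, norm_zero] at this
    exact absurd (lt_of_lt_of_le hr this) (lt_irrefl 0)
  set f : X → czero := fun v =>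
    if h : ∃ n, v = x n then (r ^ α) • e (Classical.choose h) else 0 with hf
  have hfval : ∀ n, f (x n) = (r ^ α) • e n := by
    intro n
    have h : ∃ k, x n = x k := ⟨n, rfl⟩
    have : Classical.choose h = n := (hinj (Classical.choose_spec h)).symm
    simp only [hf, dif_pos h, this]
  have hrα : (0:ℝ) ≤ r ^ α := Real.rpow_nonneg hr.le α
  have hHol : HolderOnR 1 α f (Set.range x) := by
    rintro u ⟨n, rfl⟩ v ⟨m, rfl⟩
    rw [hfval n, hfval m]
    rcases eq_or_ne n m with h | h
    · subst h
      simp only [sub_self, norm_zero]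
      exact mul_nonneg zero_le_one (Real.rpow_nonneg le_rfl α)
    · have h1 : ‖(r ^ α) • e n - (r ^ α) • e m‖ ≤ r ^ α := by
        refine czero_norm_le _ hrα fun k => ?_
        have : ((r ^ α) • e n - (r ^ α) • e m) k
            = r ^ α * (if k = n then 1 else 0) - r ^ α * (if k = m then 1 else 0) := by
          simp [e]
        rw [this]
        rcases eq_or_ne k n with hk | hk <;> rcases eq_or_ne k m with hk' | hk' <;>
          simp_all [abs_of_nonneg hrα]
      have h2 : r ^ α ≤ ‖x n - x m‖ ^ α :=
        Real.rpow_le_rpow hr.le (hsep n m h) hα0.le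
      calc ‖(r ^ α) • e n - (r ^ α) • e m‖ ≤ r ^ α := h1
        _ ≤ ‖x n - x m‖ ^ α := h2
        _ = 1 * ‖x n - x m‖ ^ α := (one_mul _).symm
  obtain ⟨F, hEq, K', hK'0, hHolF, hK'le⟩ := hExt (Set.range x) f 1 zero_le_one hHol
  have hbound : ∀ n, |(F 0 : ℕ → ℝ) n - r ^ α| ≤ K' := by
    intro n
    have h1 : ‖F 0 - F (x n)‖ ≤ K' * ‖(0:X) - x n‖ ^ α := hHolF 0 (x n)
    have h2 : ‖(0:X) - x n‖ ^ α ≤ 1 := by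
      rw [zero_sub, norm_neg]
      exact Real.rpow_le_one (norm_nonneg _) (hx n) hα0.le
    have h3 : ‖F 0 - F (x n)‖ ≤ K' := by
      calc ‖F 0 - F (x n)‖ ≤ K' * ‖(0:X) - x n‖ ^ α := h1
        _ ≤ K' * 1 := by exact mul_le_mul_of_nonneg_left h2 hK'0
        _ = K' := mul_one _
    have h4 : F (x n) = (r ^ α) • e n := by
      rw [hEq (Set.mem_range_self n), hfval n]
    rw [h4] at h3
    have h5 : |(F 0 : ℕ → ℝ) n - r ^ α| = ‖(F 0 - (r ^ α) • e n) n‖ := by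
      simp [e]
    rw [h5]
    exact le_trans (czero_norm_apply_le _ n) h3
  have htend : Tendsto (fun n => |(F 0 : ℕ → ℝ) n - r ^ α|) atTop (nhds (r ^ α)) := by
    have h0 : Tendsto (fun n => (F 0 : ℕ → ℝ) n) atTop (nhds 0) := by
      have := (F 0).zero_at_infty'
      rwa [Filter.cocompact_eq_cofinite, Nat.cofinite_eq_atTop] at this
    have h1 : Tendsto (fun n => (F 0 : ℕ → ℝ) n - r ^ α) atTop (nhds (0 - r ^ α)) :=
      h0.sub tendsto_const_nhds
    have h2 := h1.abs
    rwa [zero_sub, abs_neg, abs_of_nonneg hrα] at h2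
  have : r ^ α ≤ K' := le_of_tendsto' htend hbound
  linarith [hK'le]

/-- For every infinite-dimensional Banach space `X` and every `α ∈ (0, 1]`,
`κ(X)^α ≤ λ_α(X, c₀)`. -/
theorem statement0 (X : Type*) [NormedAddCommGroup X] [NormedSpace ℝ X] [CompleteSpace X]
    (hX : ¬ FiniteDimensional ℝ X) (α : ℝ) (hα0 : 0 < α) (hα1 : α ≤ 1) :
    ENNReal.ofReal (kottman X ^ α) ≤ holderExt α X czero := by
    classical
  refine le_sInf ?_
  rintro L ⟨l, hl0, rfl, hExt⟩
  refine ENNReal.ofReal_le_ofReal ?_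
  set S := {r : ℝ | ∃ x : ℕ → X, (∀ n, ‖x n‖ ≤ 1) ∧ ∀ n m, n ≠ m → r ≤ ‖x n - x m‖} with hS
  have h0mem : (0:ℝ) ∈ S := ⟨0, fun n => by simp, fun n m _ => by simp⟩
  have hbdd : BddAbove S := by
    refine ⟨2, ?_⟩
    rintro r ⟨x, hx, hsep⟩
    calc r ≤ ‖x 0 - x 1‖ := hsep 0 1 (by norm_num)
      _ ≤ ‖x 0‖ + ‖x 1‖ := norm_sub_le _ _
      _ ≤ 2 := by linarith [hx 0, hx 1]
  have hκ0 : 0 ≤ kottman X := le_csSup hbdd h0mem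
  have hκle : kottman X ≤ l ^ α⁻¹ := by
    refine csSup_le ⟨0, h0mem⟩ ?_
    rintro r ⟨x, hx, hsep⟩
    rcases le_or_gt r 0 with hr | hr
    · exact hr.trans (Real.rpow_nonneg hl0 _)
    · have hkey : r ^ α ≤ l := key_lemma hα0 hr hl0 x hx hsep hExt
      have : (r ^ α) ^ α⁻¹ ≤ l ^ α⁻¹ :=
        Real.rpow_le_rpow (Real.rpow_nonneg hr.le α) hkey (inv_nonneg.2 hα0.le)
      rwa [← Real.rpow_mul hr.le, mul_inv_cancel₀ hα0.ne', Real.rpow_one] at this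
  calc kottman X ^ α ≤ (l ^ α⁻¹) ^ α := Real.rpow_le_rpow hκ0 hκle hα0.le
    _ = l := by rw [← Real.rpow_mul hl0, inv_mul_cancel₀ hα0.ne', Real.rpow_one]
end
end

section
/- Let X be an infinite-dimensional Banach space with Kottman constant κ = κ(X), let α ∈ (0,1] and ε′ > 0. Then there is no sequence (x′ₙ) in the closed unit ball of X satisfying κ^α ‖x′_k‖^α + ε′ < ‖x′_j − x′_k‖^α for all j < k. -/
open Set Filter Topology
open scoped ENNReal NNReal

noncomputable section

/-- Let `X` be an infinite-dimensional Banach space with Kottman constant `κ`, `α ∈ (0,1]`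
and `ε' > 0`. Then there is no sequence `(x'ₙ)` in the closed unit ball of `X` with
`κ^α ‖x'_k‖^α + ε' < ‖x'_j - x'_k‖^α` for all `j < k`. -/
theorem statement5 (X : Type*) [NormedAddCommGroup X] [NormedSpace ℝ X] [CompleteSpace X]
    (hX : ¬ FiniteDimensional ℝ X) (α ε' : ℝ) (hα0 : 0 < α) (hα1 : α ≤ 1) (hε' : 0 < ε') :
    ¬ ∃ x : ℕ → X, (∀ n, ‖x n‖ ≤ 1) ∧
      ∀ j k, j < k → kottman X ^ α * ‖x k‖ ^ α + ε' < ‖x j - x k‖ ^ α := by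
  rintro ⟨x, hx1, h⟩
  have hbdd : BddAbove {r : ℝ | ∃ x : ℕ → X, (∀ n, ‖x n‖ ≤ 1) ∧
      ∀ n m, n ≠ m → r ≤ ‖x n - x m‖} := by
    refine ⟨2, ?_⟩
    rintro r ⟨z, hz1, hz2⟩
    calc r ≤ ‖z 0 - z 1‖ := hz2 0 1 (by norm_num)
      _ ≤ ‖z 0‖ + ‖z 1‖ := norm_sub_le _ _
      _ ≤ 2 := by linarith [hz1 0, hz1 1]
  have hκ0 : 0 ≤ kottman X :=
    le_csSup hbdd ⟨fun _ => 0, fun _ => by simp, fun n m _ => by simp⟩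
  set κ := kottman X with hκdef
  have hα : α ≠ 0 := ne_of_gt hα0
  set c : ℝ := ε' ^ α⁻¹ / 2 with hcdef
  have hc0 : 0 < c := by
    have := Real.rpow_pos_of_pos hε' α⁻¹
    positivity
  -- at most one index has small norm
  have hsmall : ∀ j k, j < k → ‖x j‖ ≤ c → ‖x k‖ ≤ c → False := by
    intro j k hjk hj hk
    have hd : ‖x j - x k‖ ≤ ε' ^ α⁻¹ := by
      calc ‖x j - x k‖ ≤ ‖x j‖ + ‖x k‖ := norm_sub_le _ _
        _ ≤ ε' ^ α⁻¹ := by rw [hcdef] at hj hk; linarith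
    have hd2 : ‖x j - x k‖ ^ α ≤ ε' := by
      calc ‖x j - x k‖ ^ α ≤ (ε' ^ α⁻¹) ^ α :=
            Real.rpow_le_rpow (norm_nonneg _) hd hα0.le
        _ = ε' := Real.rpow_inv_rpow hε'.le hα
    have := h j k hjk
    have h0 : 0 ≤ κ ^ α * ‖x k‖ ^ α := by positivity
    linarith
  have hBfin : {k | ‖x k‖ ≤ c}.Finite := by
    apply Set.Subsingleton.finite
    intro j hj k hk
    by_contra hne
    rcases lt_or_gt_of_ne hne with hlt | hlt
    · exact hsmall j k hlt hj hk
    · exact hsmall k j hlt hk hj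
  have hev : ∀ᶠ k in atTop, c < ‖x k‖ := by
    rw [← Nat.cofinite_eq_atTop]
    have : {k | ‖x k‖ ≤ c}ᶜ ∈ (cofinite : Filter ℕ) := by
      rw [mem_cofinite, compl_compl]; exact hBfin
    filter_upwards [this] with k hk
    exact lt_of_not_ge hk
  -- extract a subsequence with converging norms
  obtain ⟨L, hLmem, φ, hφ, hLtend⟩ :=
    (isCompact_Icc (a := (0:ℝ)) (b := 1)).tendsto_subseq
      (x := fun n => ‖x n‖) (fun n => ⟨norm_nonneg _, hx1 n⟩)
  have hcL : c ≤ L := by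
    refine ge_of_tendsto hLtend ?_
    exact (hφ.tendsto_atTop.eventually hev).mono fun n hn => hn.le
  have hL0 : 0 < L := hc0.trans_le hcL
  -- choose η
  have hgcont : ContinuousAt (fun η : ℝ => κ ^ α * (L + η) ^ α - κ ^ α * (L - η) ^ α) 0 := by
    have h1 : ContinuousAt (fun η : ℝ => (L + η) ^ α) 0 := by
      apply ContinuousAt.comp (g := fun t : ℝ => t ^ α)
      · exact Real.continuousAt_rpow_const _ _ (Or.inr hα0.le)
      · fun_prop
    have h2 : ContinuousAt (fun η : ℝ => (L - η) ^ α) 0 := by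
      apply ContinuousAt.comp (g := fun t : ℝ => t ^ α)
      · exact Real.continuousAt_rpow_const _ _ (Or.inr hα0.le)
      · fun_prop
    fun_prop
  have hg0 : (fun η : ℝ => κ ^ α * (L + η) ^ α - κ ^ α * (L - η) ^ α) 0 = 0 := by simp
  have hev2 : ∀ᶠ η in 𝓝[>] (0:ℝ),
      κ ^ α * (L + η) ^ α - κ ^ α * (L - η) ^ α < ε' ∧ η < L := by
    apply Filter.eventually_inf_principal.mpr
    have hA : ∀ᶠ η in 𝓝 (0:ℝ),
        κ ^ α * (L + η) ^ α - κ ^ α * (L - η) ^ α < ε' := by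
      have := hgcont.tendsto
      simp only [add_zero, sub_zero, sub_self] at this
      exact this.eventually_lt_const hε'
    have hB : ∀ᶠ η in 𝓝 (0:ℝ), η < L := eventually_lt_nhds hL0
    filter_upwards [hA, hB] with η h1 h2 _
    exact ⟨h1, h2⟩
  obtain ⟨η, ⟨hηg, hηL⟩, hη0⟩ :=
    (hev2.and self_mem_nhdsWithin).exists
  have hb0 : 0 < L + η := by linarith
  have ha0 : 0 < L - η := by linarith
  -- eventually norms are in (L-η, L+η)
  obtain ⟨N, hN⟩ := (hLtend.eventually
    (Ioo_mem_nhds (by linarith : L - η < L) (by linarith : L < L + η))).exists_forall_of_atTop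
  set t : ℝ := (κ ^ α * (L - η) ^ α + ε') ^ α⁻¹ with htdef
  have ht0 : 0 < t := Real.rpow_pos_of_pos (by positivity) _
  have htα : t ^ α = κ ^ α * (L - η) ^ α + ε' :=
    Real.rpow_inv_rpow (by positivity) hα
  set y : ℕ → X := fun i => (L + η)⁻¹ • x (φ (N + i)) with hydef
  have hy1 : ∀ i, ‖y i‖ ≤ 1 := by
    intro i
    have := (hN (N + i) (Nat.le_add_right _ _)).2
    rw [hydef]
    simp only [norm_smul, norm_inv, Real.norm_eq_abs, abs_of_pos hb0]
    rw [inv_mul_le_iff₀ hb0, mul_one]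
    exact this.le
  have key : ∀ n m, n < m → t ≤ ‖x (φ (N + n)) - x (φ (N + m))‖ := by
    intro n m hnm
    have hlt : φ (N + n) < φ (N + m) := hφ (by omega)
    have hh := h _ _ hlt
    have hnorm : L - η < ‖x (φ (N + m))‖ := (hN (N + m) (Nat.le_add_right _ _)).1
    have h1 : (L - η) ^ α ≤ ‖x (φ (N + m))‖ ^ α :=
      Real.rpow_le_rpow ha0.le hnorm.le hα0.le
    have h2 : t ^ α ≤ ‖x (φ (N + n)) - x (φ (N + m))‖ ^ α := by
      rw [htα]
      have h3 : κ ^ α * (L - η) ^ α ≤ κ ^ α * ‖x (φ (N + m))‖ ^ α :=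
        mul_le_mul_of_nonneg_left h1 (by positivity)
      linarith
    calc t = (t ^ α) ^ α⁻¹ := (Real.rpow_rpow_inv ht0.le hα).symm
      _ ≤ (‖x (φ (N + n)) - x (φ (N + m))‖ ^ α) ^ α⁻¹ :=
          Real.rpow_le_rpow (by positivity) h2 (by positivity)
      _ = _ := Real.rpow_rpow_inv (norm_nonneg _) hα
  have hysep : ∀ n m, n ≠ m → t / (L + η) ≤ ‖y n - y m‖ := by
    intro n m hnm
    have hgen : ∀ n m, n < m → t / (L + η) ≤ ‖y n - y m‖ := by
      intro n m hnm
      rw [hydef]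
      simp only [← smul_sub, norm_smul, norm_inv, Real.norm_eq_abs, abs_of_pos hb0]
      rw [div_eq_inv_mul]
      exact mul_le_mul_of_nonneg_left (key n m hnm) (by positivity)
    rcases lt_or_gt_of_ne hnm with hlt | hlt
    · exact hgen n m hlt
    · rw [norm_sub_rev]; exact hgen m n hlt
  have hmem : t / (L + η) ≤ κ := le_csSup hbdd ⟨y, hy1, hysep⟩
  have hfin : κ < t / (L + η) := by
    rw [lt_div_iff₀ hb0]
    by_contra hcon
    push_neg at hcon
    have h1 : t ^ α ≤ (κ * (L + η)) ^ α :=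
      Real.rpow_le_rpow ht0.le hcon hα0.le
    rw [htα, Real.mul_rpow hκ0 hb0.le] at h1
    linarith
  linarith
end
end

section
/- For every infinite-dimensional Banach space X, 1 < q ≤ 2, and α ∈ (0,1], one has 2^{−1/q*}·κ(X)^α ≤ λ_α(X, L_q), where 1/q + 1/q* = 1 and λ_α(X, L_q) is the optimal α-Hölder extension constant into L_q (possibly infinite). -/
open Set Filter MeasureTheory
open scoped ENNReal NNReal
noncomputable section
namespace Statement15Aux

def rad (n : ℕ) (t : ℝ) : ℝ := if Even ⌊t * 2 ^ (n + 1)⌋ then 1 else -1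

lemma rad_eq_or (n : ℕ) (t : ℝ) : rad n t = 1 ∨ rad n t = -1 := by
  unfold rad; split <;> simp

lemma rad_sq (n : ℕ) (t : ℝ) : rad n t * rad n t = 1 := by
  rcases rad_eq_or n t with h | h <;> rw [h] <;> norm_num

lemma abs_rad (n : ℕ) (t : ℝ) : |rad n t| = 1 := by
  rcases rad_eq_or n t with h | h <;> rw [h] <;> norm_num

lemma measurable_rad (n : ℕ) : Measurable (rad n) := by
  unfold rad
  have hf : Measurable fun t : ℝ => ⌊t * 2 ^ (n + 1)⌋ :=
    (measurable_id.mul_const _).floor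
  have hs : MeasurableSet {t : ℝ | Even ⌊t * 2 ^ (n + 1)⌋} :=
    hf (MeasurableSet.of_discrete (s := {k : ℤ | Even k}))
  exact Measurable.ite hs measurable_const measurable_const


lemma floor_piece {j m k : ℕ} (hj : j ≤ m) {t : ℝ}
    (h1 : (k : ℝ) / 2 ^ (m + 1) ≤ t) (h2 : t < ((k : ℝ) + 1) / 2 ^ (m + 1)) :
    ⌊t * 2 ^ (j + 1)⌋ = (k / 2 ^ (m - j) : ℕ) := by
  have hd : (2 : ℝ) ^ (m + 1) = 2 ^ (j + 1) * 2 ^ (m - j) := by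
    rw [← pow_add]; congr 1; omega
  have hdpos : (0 : ℝ) < 2 ^ (m - j) := by positivity
  have hjpos : (0 : ℝ) < 2 ^ (j + 1) := by positivity
  have hmpos : (0 : ℝ) < 2 ^ (m + 1) := by positivity
  have hlow : (k : ℝ) / 2 ^ (m - j) ≤ t * 2 ^ (j + 1) := by
    rw [div_le_iff₀ hdpos]
    calc (k : ℝ) = (k : ℝ) / 2 ^ (m + 1) * 2 ^ (m + 1) := by field_simp
    _ ≤ t * 2 ^ (m + 1) := by
        exact mul_le_mul_of_nonneg_right h1 hmpos.le
    _ = t * 2 ^ (j + 1) * 2 ^ (m - j) := by rw [hd]; ring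
  have hhigh : t * 2 ^ (j + 1) < ((k : ℝ) + 1) / 2 ^ (m - j) := by
    rw [lt_div_iff₀ hdpos]
    calc t * 2 ^ (j + 1) * 2 ^ (m - j) = t * 2 ^ (m + 1) := by rw [hd]; ring
    _ < ((k : ℝ) + 1) / 2 ^ (m + 1) * 2 ^ (m + 1) := by
        exact mul_lt_mul_of_pos_right h2 hmpos
    _ = (k : ℝ) + 1 := by field_simp
  rw [Int.floor_eq_iff]
  constructor
  · refine le_trans ?_ hlow
    calc ((k / 2 ^ (m - j) : ℕ) : ℝ) ≤ (k : ℝ) / (2 ^ (m - j) : ℕ) := Nat.cast_div_le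
    _ = (k : ℝ) / 2 ^ (m - j) := by push_cast; ring
  · rw [Int.cast_natCast]
    refine lt_of_lt_of_le hhigh ?_
    have hk : k + 1 ≤ 2 ^ (m - j) * (k / 2 ^ (m - j)) + 2 ^ (m - j) := by
      have h1 := Nat.div_add_mod k (2 ^ (m - j))
      have h2 : k % 2 ^ (m - j) < 2 ^ (m - j) := Nat.mod_lt _ (by positivity)
      omega
    have hc := (Nat.cast_le (α := ℝ)).mpr hk
    push_cast at hc
    rw [div_le_iff₀ hdpos]
    nlinarith [hc]

lemma rad_piece {j m k : ℕ} (hj : j ≤ m) {t : ℝ}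
    (h1 : (k : ℝ) / 2 ^ (m + 1) ≤ t) (h2 : t < ((k : ℝ) + 1) / 2 ^ (m + 1)) :
    rad j t = if Even (k / 2 ^ (m - j)) then 1 else -1 := by
  unfold rad
  rw [floor_piece hj h1 h2]
  simp only [Int.even_coe_nat]

/-- Pairwise cancellation sum. -/
lemma sum_cancel {c : ℕ → ℝ} (h : ∀ i, c (2 * i) + c (2 * i + 1) = 0) (N : ℕ) :
    ∑ k ∈ Finset.range (2 * N), c k = 0 := by
  induction N with
  | zero => simp
  | succ n ih =>
    have : 2 * (n + 1) = (2 * n + 1) + 1 := by omega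
    rw [this, Finset.sum_range_succ, Finset.sum_range_succ, ih]
    have := h n
    linarith

lemma rad_orth {n m : ℕ} (hnm : n < m) :
    ∫ t in Icc (0 : ℝ) 1, rad n t * rad m t = 0 := by
  set K : ℕ := 2 ^ (m + 1) with hK
  have hK0 : (0 : ℝ) < (K : ℝ) := by positivity
  set a : ℕ → ℝ := fun k => (k : ℝ) / K with ha
  set c : ℕ → ℝ := fun k =>
    (if Even (k / 2 ^ (m - n)) then (1 : ℝ) else -1) * (if Even k then (1 : ℝ) else -1)
    with hc
  -- a.e. equality on each piece
  have hpiece : ∀ k : ℕ, (fun t => rad n t * rad m t)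
      =ᵐ[volume.restrict (Ioc (a k) (a (k + 1)))] fun _ => c k := by
    intro k
    have h0 : ∀ᵐ t : ℝ ∂volume.restrict (Ioc (a k) (a (k + 1))), t ≠ a (k + 1) := by
      refine ae_restrict_of_ae (ae_iff.mpr ?_)
      simpa using measure_singleton (a (k + 1))
    filter_upwards [h0, ae_restrict_mem measurableSet_Ioc] with t ht htmem
    have h1 : (k : ℝ) / 2 ^ (m + 1) ≤ t := le_of_lt (by exact_mod_cast htmem.1)
    have h2 : t < ((k : ℝ) + 1) / 2 ^ (m + 1) := by
      rcases lt_or_eq_of_le htmem.2 with h | h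
      · exact_mod_cast h
      · exact absurd h ht
    have e1 := rad_piece (le_of_lt hnm) h1 h2
    have e2 := rad_piece (le_refl m) h1 h2
    rw [e1, e2, hc]
    simp [Nat.sub_self]
  have hle : ∀ k : ℕ, a k ≤ a (k + 1) := by
    intro k; rw [ha]; simp only
    gcongr
    exact_mod_cast Nat.le_succ k
  have hInt : ∀ k : ℕ, IntervalIntegrable (fun t => rad n t * rad m t) volume (a k) (a (k + 1)) := by
    intro k
    rw [intervalIntegrable_iff]
    have : Set.uIoc (a k) (a (k + 1)) = Ioc (a k) (a (k + 1)) := Set.uIoc_of_le (hle k)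
    rw [this]
    exact (integrableOn_const measure_Ioc_lt_top.ne).congr_fun_ae (hpiece k).symm
  have hval : ∀ k : ℕ, ∫ t in (a k)..(a (k + 1)), rad n t * rad m t = c k / K := by
    intro k
    rw [intervalIntegral.integral_of_le (hle k), integral_congr_ae (hpiece k),
      setIntegral_const, measureReal_def, Real.volume_Ioc, ENNReal.toReal_ofReal (by linarith [hle k])]
    rw [ha]; push_cast; rw [smul_eq_mul]; ring
  have hsum := intervalIntegral.sum_integral_adjacent_intervals (f := fun t => rad n t * rad m t)
      (μ := volume) (a := a) (n := K) (fun k _ => hInt k)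
  have ha0 : a 0 = 0 := by simp [ha]
  have haK : a K = 1 := by rw [ha]; field_simp
  have hcancel : ∑ k ∈ Finset.range K, c k = 0 := by
    have h2 : K = 2 * 2 ^ m := by rw [hK]; ring
    rw [h2]
    refine sum_cancel (fun i => ?_) _
    have hdiv : (2 * i) / 2 ^ (m - n) = (2 * i + 1) / 2 ^ (m - n) := by
      obtain ⟨e, he⟩ : ∃ e, m - n = e + 1 := ⟨m - n - 1, by omega⟩
      rw [he, pow_succ', ← Nat.div_div_eq_div_mul, ← Nat.div_div_eq_div_mul]
      have h2 : 2 * i / 2 = (2 * i + 1) / 2 := by omega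
      rw [h2]
    rw [hc]
    simp only [hdiv]
    have heven : Even (2 * i) := even_two_mul i
    have hodd : ¬ Even (2 * i + 1) := by simp [Nat.even_add_one, heven]
    simp [heven, hodd]
  have hicc : ∫ t in Icc (0 : ℝ) 1, rad n t * rad m t
      = ∫ t in (0 : ℝ)..1, rad n t * rad m t := by
    rw [intervalIntegral.integral_of_le (by norm_num : (0:ℝ) ≤ 1),
      integral_Icc_eq_integral_Ioc]
  have h2 : ∫ t in (a 0)..(a K), rad n t * rad m t = 0 := by
    rw [← hsum, Finset.sum_congr rfl (fun k _ => hval k), ← Finset.sum_div, hcancel, zero_div]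
  rw [ha0, haK] at h2
  exact hicc.trans h2

/-! ### The unit interval layer -/

abbrev Icc01 := Set.Icc (0 : ℝ) 1

def μ01 : Measure Icc01 := (volume : Measure Icc01)

lemma μ01_def : μ01 = (volume : Measure Icc01) := rfl

lemma μ01_eq : μ01 = Measure.comap Subtype.val (volume : Measure ℝ) := rfl

instance : IsProbabilityMeasure μ01 := by
  constructor
  rw [μ01_eq, comap_subtype_coe_apply measurableSet_Icc, image_univ,
    Subtype.range_coe, Real.volume_Icc]
  norm_num

def Radf (n : ℕ) : Icc01 → ℝ := fun x => rad n ↑x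

lemma measurable_Radf (n : ℕ) : Measurable (Radf n) :=
  (measurable_rad n).comp measurable_subtype_coe

lemma Radf_eq_or (n : ℕ) (x : Icc01) : Radf n x = 1 ∨ Radf n x = -1 := rad_eq_or n _

lemma abs_Radf (n : ℕ) (x : Icc01) : |Radf n x| = 1 := abs_rad n _

lemma integral_Radf_mul (n m : ℕ) (hnm : n ≠ m) :
    ∫ x, Radf n x * Radf m x ∂μ01 = 0 := by
  have key : ∀ n m : ℕ, n < m → ∫ x, Radf n x * Radf m x ∂μ01 = 0 := by
    intro n m h
    have : ∫ x, Radf n x * Radf m x ∂μ01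
        = ∫ t in Icc (0 : ℝ) 1, rad n t * rad m t := by
      rw [μ01_eq]
      exact integral_subtype_comap measurableSet_Icc (fun t => rad n t * rad m t)
    rw [this]
    exact rad_orth h
  rcases lt_or_gt_of_ne hnm with h | h
  · exact key n m h
  · rw [show (fun x => Radf n x * Radf m x) = fun x => Radf m x * Radf n x from
      funext fun x => mul_comm _ _]
    exact key m n h

lemma integrable_bdd {f : Icc01 → ℝ} (hf : Measurable f) {C : ℝ} (h : ∀ x, |f x| ≤ C) :
    Integrable f μ01 :=
  memLp_one_iff_integrable.mp
    (MemLp.of_bound hf.aestronglyMeasurable C (Filter.Eventually.of_forall fun x => by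
      rw [Real.norm_eq_abs]; exact h x))

lemma integrable_Radf_mul (n m : ℕ) : Integrable (fun x => Radf n x * Radf m x) μ01 :=
  integrable_bdd ((measurable_Radf n).mul (measurable_Radf m)) (C := 1) fun x => by
    rw [abs_mul, abs_Radf, abs_Radf, one_mul]

lemma memℒp_Radf (n : ℕ) (p : ℝ≥0∞) : MemLp (Radf n) p μ01 :=
  MemLp.of_bound (measurable_Radf n).aestronglyMeasurable 1
    (Filter.Eventually.of_forall fun x => by rw [Real.norm_eq_abs, abs_Radf])

lemma integral_Radf_mul_self (n : ℕ) : ∫ x, Radf n x * Radf n x ∂μ01 = 1 := by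
  have : (fun x => Radf n x * Radf n x) = fun _ => (1 : ℝ) := funext fun x => rad_sq n _
  rw [this, integral_const]
  simp

/-- Second moment of the sum of the first `N` Rademacher functions. -/
lemma integral_sq_sum (N : ℕ) :
    ∫ x, (∑ n ∈ Finset.range N, Radf n x) * (∑ n ∈ Finset.range N, Radf n x) ∂μ01 = N := by
  have hexp : ∀ x : Icc01, (∑ n ∈ Finset.range N, Radf n x) * (∑ n ∈ Finset.range N, Radf n x)
      = ∑ n ∈ Finset.range N, ∑ m ∈ Finset.range N, Radf n x * Radf m x := fun x => by
    rw [Finset.sum_mul_sum]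
  rw [show (fun x => (∑ n ∈ Finset.range N, Radf n x) * (∑ n ∈ Finset.range N, Radf n x))
      = fun x => ∑ n ∈ Finset.range N, ∑ m ∈ Finset.range N, Radf n x * Radf m x from
    funext hexp]
  rw [integral_finset_sum _ fun n _ => (integrable_finset_sum _ fun m _ => integrable_Radf_mul n m)]
  · have : ∀ n ∈ Finset.range N,
        ∫ x, ∑ m ∈ Finset.range N, Radf n x * Radf m x ∂μ01
        = ∑ m ∈ Finset.range N, ∫ x, Radf n x * Radf m x ∂μ01 := fun n _ =>
      integral_finset_sum _ fun m _ => integrable_Radf_mul n m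
    rw [Finset.sum_congr rfl this]
    have hval : ∀ n ∈ Finset.range N, ∑ m ∈ Finset.range N, ∫ x, Radf n x * Radf m x ∂μ01
        = 1 := by
      intro n hn
      have : ∀ m ∈ Finset.range N, ∫ x, Radf n x * Radf m x ∂μ01
          = if n = m then 1 else 0 := by
        intro m _
        by_cases h : n = m
        · rw [if_pos h, h]; exact integral_Radf_mul_self m
        · rw [if_neg h]; exact integral_Radf_mul n m h
      rw [Finset.sum_congr rfl this, Finset.sum_ite_eq (Finset.range N) n fun _ => (1:ℝ),
        if_pos hn]
    rw [Finset.sum_congr rfl hval, Finset.sum_const, Finset.card_range, nsmul_eq_mul, mul_one]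

lemma measure_ne_set {i j : ℕ} (hij : i ≠ j) :
    μ01 {x | Radf i x ≠ Radf j x} = ENNReal.ofReal (1 / 2) := by
  set A : Set Icc01 := {x | Radf i x ≠ Radf j x} with hA
  have hAm : MeasurableSet A := by
    have : A = (fun x => Radf i x - Radf j x) ⁻¹' ({0}ᶜ) := by
      ext x; simp [hA, sub_eq_zero]
    rw [this]
    exact ((measurable_Radf i).sub (measurable_Radf j)) (measurableSet_singleton 0).compl
  have hpt : ∀ x, Radf i x * Radf j x = 1 - 2 * A.indicator (fun _ => (1:ℝ)) x := by
    intro x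
    by_cases hx : x ∈ A
    · rcases Radf_eq_or i x with h1 | h1 <;> rcases Radf_eq_or j x with h2 | h2 <;>
        simp only [indicator_of_mem hx] <;>
        first
          | (exact absurd (h1.trans h2.symm) hx)
          | (rw [h1, h2]; norm_num)
    · have : Radf i x = Radf j x := not_not.mp hx
      rw [indicator_of_notMem hx, this]
      rcases Radf_eq_or j x with h2 | h2 <;> rw [h2] <;> norm_num
  have hind : Integrable (A.indicator fun _ => (1:ℝ)) μ01 :=
    (integrable_const (1:ℝ)).indicator hAm
  have h0 : (0:ℝ) = 1 - 2 * (μ01 A).toReal := by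
    calc (0:ℝ) = ∫ x, Radf i x * Radf j x ∂μ01 := (integral_Radf_mul i j hij).symm
    _ = ∫ x, (1 - 2 * A.indicator (fun _ => (1:ℝ)) x) ∂μ01 := by
        congr 1; exact funext hpt
    _ = ∫ x, (1:ℝ) ∂μ01 - 2 * ∫ x, A.indicator (fun _ => (1:ℝ)) x ∂μ01 := by
        rw [integral_sub (integrable_const 1) (hind.const_mul 2), integral_const_mul]
    _ = 1 - 2 * (μ01 A).toReal := by
        rw [integral_indicator_const (1:ℝ) hAm, integral_const]
        simp [measureReal_def]
  have htoReal : (μ01 A).toReal = 1 / 2 := by linarith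
  rw [← htoReal, ENNReal.ofReal_toReal (measure_ne_top μ01 A)]

/-- Pointwise Naor-type estimate. -/
lemma naor_pointwise {q δ : ℝ} (hq : 1 ≤ q) (hδ : 0 ≤ δ) (N : ℕ) (z : ℝ) (ε : ℕ → ℝ)
    (hε : ∀ n, ε n = 1 ∨ ε n = -1)
    (hT : |∑ n ∈ Finset.range N, ε n| ≤ δ * N) :
    (1 - 4 ^ q * δ) * N ≤ ∑ n ∈ Finset.range N, |z - ε n| ^ q := by
  have hq0 : (0:ℝ) ≤ q := by linarith
  set a : ℝ := |z - 1| ^ q with ha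
  set b : ℝ := |z + 1| ^ q with hb
  set T : ℝ := ∑ n ∈ Finset.range N, ε n with hTdef
  have ha0 : 0 ≤ a := Real.rpow_nonneg (abs_nonneg _) q
  have hb0 : 0 ≤ b := Real.rpow_nonneg (abs_nonneg _) q
  have key : ∑ n ∈ Finset.range N, |z - ε n| ^ q
      = ((N : ℝ) + T) / 2 * a + ((N : ℝ) - T) / 2 * b := by
    have hterm : ∀ n, |z - ε n| ^ q = (1 + ε n) / 2 * a + (1 - ε n) / 2 * b := by
      intro n
      rcases hε n with h | h
      · rw [h]; norm_num [ha]
      · rw [h]; norm_num [hb, sub_neg_eq_add]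
    rw [Finset.sum_congr rfl fun n _ => hterm n]
    rw [Finset.sum_add_distrib, ← Finset.sum_mul, ← Finset.sum_mul, ← Finset.sum_div,
      ← Finset.sum_div, Finset.sum_add_distrib, Finset.sum_sub_distrib,
      Finset.sum_const, Finset.card_range, nsmul_eq_mul, mul_one, ← hTdef]
  have hTN : |T| ≤ (N : ℝ) := by
    calc |T| ≤ ∑ n ∈ Finset.range N, |ε n| := Finset.abs_sum_le_sum_abs _ _
    _ = (N : ℝ) := by
        rw [Finset.sum_congr rfl fun n _ => (by rcases hε n with h | h <;> rw [h] <;> norm_num :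
          |ε n| = 1)]
        simp
  have hab2 : 2 ≤ a + b := by
    have huv : (2 : ℝ) ≤ |z - 1| + |z + 1| := by
      have h := abs_add_le (z + 1) (1 - z)
      rw [show z + 1 + (1 - z) = 2 from by ring] at h
      have h3 : |1 - z| = |z - 1| := abs_sub_comm 1 z
      rw [h3] at h
      have : |(2:ℝ)| = 2 := by norm_num
      linarith [this ▸ h]
    have cv := (convexOn_rpow hq).2 (mem_Ici.mpr (abs_nonneg (z - 1)))
      (mem_Ici.mpr (abs_nonneg (z + 1))) (by norm_num : (0:ℝ) ≤ 1/2)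
      (by norm_num : (0:ℝ) ≤ 1/2) (by norm_num)
    simp only [smul_eq_mul] at cv
    have hmid : (1 : ℝ) ≤ (1/2 * |z - 1| + 1/2 * |z + 1|) ^ q :=
      Real.one_le_rpow (by linarith) hq0
    have hfin := hmid.trans cv
    rw [← ha, ← hb] at hfin
    linarith
  have h4q : (0:ℝ) < 4 ^ q := Real.rpow_pos_of_pos (by norm_num) q
  have hδN : (0:ℝ) ≤ 4 ^ q * δ * N := by positivity
  by_cases hz : |z| ≤ 3
  · have hz1 : |z - 1| ≤ 4 := by
      have := abs_add_le z (-1)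
      rw [← sub_eq_add_neg] at this
      simp only [abs_neg, abs_one] at this
      linarith
    have hz2 : |z + 1| ≤ 4 := by
      have := abs_add_le z 1
      simp only [abs_one] at this
      linarith
    have ha4 : a ≤ 4 ^ q := by
      rw [ha]; exact Real.rpow_le_rpow (abs_nonneg _) hz1 hq0
    have hb4 : b ≤ 4 ^ q := by
      rw [hb]; exact Real.rpow_le_rpow (abs_nonneg _) hz2 hq0
    have habs : |T * (a - b)| ≤ δ * N * 4 ^ q := by
      rw [abs_mul]
      have h1 : |a - b| ≤ 4 ^ q := abs_le.mpr ⟨by linarith, by linarith⟩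
      exact mul_le_mul hT h1 (abs_nonneg _) (by positivity)
    have hTab : -(δ * N * 4 ^ q) ≤ T * (a - b) := neg_le_of_abs_le habs
    have hNab : 0 ≤ (N:ℝ) * (a + b - 2) := mul_nonneg (Nat.cast_nonneg N) (by linarith)
    rw [key]
    nlinarith [hNab, hTab, hδN]
  · push_neg at hz
    have hz1 : 2 ≤ |z - 1| := by
      have := abs_sub_abs_le_abs_sub z 1
      simp only [abs_one] at this
      linarith
    have hz2 : 2 ≤ |z + 1| := by
      have h := abs_sub_abs_le_abs_sub z (-1)
      rw [sub_neg_eq_add] at h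
      simp only [abs_neg, abs_one] at h
      linarith
    have ha2 : 2 ≤ a := by
      rw [ha]
      calc (2:ℝ) = 2 ^ (1:ℝ) := (Real.rpow_one 2).symm
      _ ≤ 2 ^ q := Real.rpow_le_rpow_of_exponent_le (by norm_num) hq
      _ ≤ |z - 1| ^ q := Real.rpow_le_rpow (by norm_num) hz1 hq0
    have hb2 : 2 ≤ b := by
      rw [hb]
      calc (2:ℝ) = 2 ^ (1:ℝ) := (Real.rpow_one 2).symm
      _ ≤ 2 ^ q := Real.rpow_le_rpow_of_exponent_le (by norm_num) hq
      _ ≤ |z + 1| ^ q := Real.rpow_le_rpow (by norm_num) hz2 hq0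
    have hc1 : 0 ≤ ((N:ℝ) + T) / 2 := by linarith [(abs_le.mp hTN).1]
    have hc2 : 0 ≤ ((N:ℝ) - T) / 2 := by linarith [(abs_le.mp hTN).2]
    have e1 : ((N:ℝ) + T) / 2 * 2 ≤ ((N:ℝ) + T) / 2 * a := by
      exact mul_le_mul_of_nonneg_left ha2 hc1
    have e2 : ((N:ℝ) - T) / 2 * 2 ≤ ((N:ℝ) - T) / 2 * b := by
      exact mul_le_mul_of_nonneg_left hb2 hc2
    rw [key]
    have hN0 : (0:ℝ) ≤ N := Nat.cast_nonneg N
    nlinarith [e1, e2, hδN]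

lemma chebyshev {δ : ℝ} (hδ : 0 < δ) {N : ℕ} (hN : 0 < N) :
    μ01 {x | δ * N < |∑ n ∈ Finset.range N, Radf n x|}
      ≤ ENNReal.ofReal (1 / (δ * δ * N)) := by
  set T : Icc01 → ℝ := fun x => ∑ n ∈ Finset.range N, Radf n x with hT
  have hTm : Measurable T := Finset.measurable_sum _ fun n _ => measurable_Radf n
  have hN0 : (0:ℝ) < N := by exact_mod_cast hN
  have hε0 : (0:ℝ) < δ * N * (δ * N) := by positivity
  have hsub : {x | δ * N < |T x|}
      ⊆ {x | ENNReal.ofReal (δ * N * (δ * N)) ≤ ENNReal.ofReal (T x * T x)} := by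
    intro x hx
    simp only [mem_setOf_eq] at hx ⊢
    apply ENNReal.ofReal_le_ofReal
    calc δ * ↑N * (δ * ↑N) ≤ |T x| * |T x| :=
          mul_le_mul hx.le hx.le (by positivity) (abs_nonneg _)
    _ = T x * T x := abs_mul_abs_self _
  have hmono := measure_mono (μ := μ01) hsub
  have hcheb := mul_meas_ge_le_lintegral₀ (μ := μ01)
    (f := fun x => ENNReal.ofReal (T x * T x))
    ((ENNReal.measurable_ofReal.comp (hTm.mul hTm)).aemeasurable)
    (ENNReal.ofReal (δ * N * (δ * N)))
  have hint : ∫⁻ x, ENNReal.ofReal (T x * T x) ∂μ01 = ENNReal.ofReal N := by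
    rw [← ofReal_integral_eq_lintegral_ofReal
      (integrable_bdd (f := fun x => T x * T x) (hTm.mul hTm) (C := (N:ℝ) * N) fun x => ?_)
      (Filter.Eventually.of_forall fun x => mul_self_nonneg _)]
    · rw [hT, integral_sq_sum N]
    · rw [abs_mul]
      have hb : |T x| ≤ (N : ℝ) := by
        rw [hT]
        calc |∑ n ∈ Finset.range N, Radf n x| ≤ ∑ n ∈ Finset.range N, |Radf n x| :=
          Finset.abs_sum_le_sum_abs _ _
        _ = N := by simp [abs_Radf]
      exact mul_le_mul hb hb (abs_nonneg _) hN0.le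
  have h1 : μ01 {x | ENNReal.ofReal (δ * N * (δ * N)) ≤ ENNReal.ofReal (T x * T x)}
      ≤ ENNReal.ofReal N / ENNReal.ofReal (δ * N * (δ * N)) := by
    rw [ENNReal.le_div_iff_mul_le (Or.inl (by simp [hε0.not_ge, ENNReal.ofReal_eq_zero, hδ.ne', hN.ne']))
      (Or.inl ENNReal.ofReal_ne_top)]
    calc μ01 _ * ENNReal.ofReal (δ * N * (δ * N))
        = ENNReal.ofReal (δ * N * (δ * N)) * μ01 _ := mul_comm _ _
    _ ≤ ∫⁻ x, ENNReal.ofReal (T x * T x) ∂μ01 := hcheb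
    _ = ENNReal.ofReal N := hint
  refine le_trans (hmono.trans h1) ?_
  rw [← ENNReal.ofReal_div_of_pos hε0]
  apply ENNReal.ofReal_le_ofReal
  rw [div_le_div_iff₀ hε0 (by positivity)]
  ring_nf
  nlinarith [hN0, hδ]

/-- Main lower bound: some Rademacher function is far from any given `Z`. -/
lemma naor_lower {q : ℝ} (hq : 1 ≤ q) {δ : ℝ} (hδ : 0 < δ) {N : ℕ} (hN : 0 < N)
    {Z : Icc01 → ℝ} (hZ : AEMeasurable Z μ01) :
    ∃ n < N, ENNReal.ofReal (1 - 4 ^ q * δ) * (1 - ENNReal.ofReal (1 / (δ * δ * N)))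
      ≤ ∫⁻ x, (‖Z x - Radf n x‖₊ : ℝ≥0∞) ^ q ∂μ01 := by
  have hq0 : (0:ℝ) ≤ q := by linarith
  set T : Icc01 → ℝ := fun x => ∑ n ∈ Finset.range N, Radf n x with hT
  have hTm : Measurable T := Finset.measurable_sum _ fun n _ => measurable_Radf n
  set Bc : Set Icc01 := {x | |T x| ≤ δ * N} with hBc
  have hBcm : MeasurableSet Bc := measurableSet_le hTm.abs measurable_const
  -- pointwise bound on the good set
  have hpt : ∀ x ∈ Bc, ENNReal.ofReal ((1 - 4 ^ q * δ) * N)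
      ≤ ∑ n ∈ Finset.range N, (‖Z x - Radf n x‖₊ : ℝ≥0∞) ^ q := by
    intro x hx
    have hreal := naor_pointwise hq hδ.le N (Z x) (fun n => Radf n x)
      (fun n => Radf_eq_or n x) (by exact hx)
    calc ENNReal.ofReal ((1 - 4 ^ q * δ) * N)
        ≤ ENNReal.ofReal (∑ n ∈ Finset.range N, |Z x - Radf n x| ^ q) :=
          ENNReal.ofReal_le_ofReal hreal
    _ = ∑ n ∈ Finset.range N, ENNReal.ofReal (|Z x - Radf n x| ^ q) :=
          ENNReal.ofReal_sum_of_nonneg fun n _ => Real.rpow_nonneg (abs_nonneg _) q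
    _ = ∑ n ∈ Finset.range N, (‖Z x - Radf n x‖₊ : ℝ≥0∞) ^ q := by
          refine Finset.sum_congr rfl fun n _ => ?_
          rw [← enorm_eq_nnnorm, Real.enorm_eq_ofReal_abs, ← ENNReal.ofReal_rpow_of_nonneg (abs_nonneg _) hq0]
  -- integral lower bound for the sum
  have hsumint : ENNReal.ofReal ((1 - 4 ^ q * δ) * N) * μ01 Bc
      ≤ ∑ n ∈ Finset.range N, ∫⁻ x, (‖Z x - Radf n x‖₊ : ℝ≥0∞) ^ q ∂μ01 := by
    have hmeas : ∀ n ∈ Finset.range N,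
        AEMeasurable (fun x => (‖Z x - Radf n x‖₊ : ℝ≥0∞) ^ q) μ01 := fun n _ =>
      ((hZ.sub (measurable_Radf n).aemeasurable).nnnorm.coe_nnreal_ennreal).pow_const q
    rw [← lintegral_finset_sum' _ hmeas]
    calc ENNReal.ofReal ((1 - 4 ^ q * δ) * N) * μ01 Bc
        = ∫⁻ x, Bc.indicator (fun _ => ENNReal.ofReal ((1 - 4 ^ q * δ) * N)) x ∂μ01 := by
          rw [lintegral_indicator hBcm, setLIntegral_const]
    _ ≤ ∫⁻ x, ∑ n ∈ Finset.range N, (‖Z x - Radf n x‖₊ : ℝ≥0∞) ^ q ∂μ01 := by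
          refine lintegral_mono fun x => ?_
          by_cases hx : x ∈ Bc
          · rw [indicator_of_mem hx]; exact hpt x hx
          · rw [indicator_of_notMem hx]; exact zero_le
  -- measure of the good set
  have hBcmeas : 1 - ENNReal.ofReal (1 / (δ * δ * N)) ≤ μ01 Bc := by
    have hcompl : μ01 Bcᶜ ≤ ENNReal.ofReal (1 / (δ * δ * N)) := by
      have : Bcᶜ = {x | δ * N < |T x|} := by
        ext x; simp [hBc, not_le]
      rw [this]; exact chebyshev hδ hN
    have h1 := prob_compl_eq_one_sub (μ := μ01) hBcm.compl
    rw [compl_compl] at h1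
    rw [h1]
    exact tsub_le_tsub_left hcompl 1
  -- combine and take max
  obtain ⟨n₀, hn₀, hmax⟩ := Finset.exists_max_image (Finset.range N)
    (fun n => ∫⁻ x, (‖Z x - Radf n x‖₊ : ℝ≥0∞) ^ q ∂μ01) ⟨0, Finset.mem_range.mpr hN⟩
  refine ⟨n₀, Finset.mem_range.mp hn₀, ?_⟩
  have hchain : (N : ℝ≥0∞) * (ENNReal.ofReal (1 - 4 ^ q * δ)
        * (1 - ENNReal.ofReal (1 / (δ * δ * N))))
      ≤ (N : ℝ≥0∞) * ∫⁻ x, (‖Z x - Radf n₀ x‖₊ : ℝ≥0∞) ^ q ∂μ01 := by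
    calc (N : ℝ≥0∞) * (ENNReal.ofReal (1 - 4 ^ q * δ)
          * (1 - ENNReal.ofReal (1 / (δ * δ * N))))
        = ENNReal.ofReal ((1 - 4 ^ q * δ) * N) * (1 - ENNReal.ofReal (1 / (δ * δ * N))) := by
          rw [ENNReal.ofReal_mul' (Nat.cast_nonneg N), ENNReal.ofReal_natCast]; ring
    _ ≤ ENNReal.ofReal ((1 - 4 ^ q * δ) * N) * μ01 Bc := by
          exact mul_le_mul_right hBcmeas _
    _ ≤ ∑ n ∈ Finset.range N, ∫⁻ x, (‖Z x - Radf n x‖₊ : ℝ≥0∞) ^ q ∂μ01 := hsumint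
    _ ≤ ∑ _n ∈ Finset.range N, ∫⁻ x, (‖Z x - Radf n₀ x‖₊ : ℝ≥0∞) ^ q ∂μ01 :=
          Finset.sum_le_sum fun n hn => hmax n hn
    _ = (N : ℝ≥0∞) * ∫⁻ x, (‖Z x - Radf n₀ x‖₊ : ℝ≥0∞) ^ q ∂μ01 := by
          rw [Finset.sum_const, Finset.card_range, nsmul_eq_mul]
  exact (ENNReal.mul_le_mul_iff_right (by exact_mod_cast hN.ne') (ENNReal.natCast_ne_top N)).mp hchain

lemma eLpNorm_Radf_sub {q : ℝ} (hq1 : 1 < q) {i j : ℕ} (hij : i ≠ j) :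
    eLpNorm (Radf i - Radf j) (ENNReal.ofReal q) μ01
      = ENNReal.ofReal (2 ^ ((q - 1) / q)) := by
  have hq0 : (0:ℝ) < q := by linarith
  have hp0 : ENNReal.ofReal q ≠ 0 := by simp [ENNReal.ofReal_eq_zero, hq0.not_ge]
  have hptop : ENNReal.ofReal q ≠ ∞ := ENNReal.ofReal_ne_top
  rw [eLpNorm_eq_lintegral_rpow_enorm_toReal hp0 hptop, ENNReal.toReal_ofReal hq0.le]
  simp only [enorm_eq_nnnorm]
  set A : Set Icc01 := {x | Radf i x ≠ Radf j x} with hA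
  have hAm : MeasurableSet A := by
    have : A = (fun x => Radf i x - Radf j x) ⁻¹' ({0}ᶜ) := by
      ext x; simp [hA, sub_eq_zero]
    rw [this]
    exact ((measurable_Radf i).sub (measurable_Radf j)) (measurableSet_singleton 0).compl
  have hfun : (fun x => (‖(Radf i - Radf j) x‖₊ : ℝ≥0∞) ^ q)
      = A.indicator fun _ => ENNReal.ofReal (2 ^ q) := by
    funext x
    by_cases hx : x ∈ A
    · rw [indicator_of_mem hx]
      have h2 : ‖(Radf i - Radf j) x‖₊ = (2 : ℝ≥0) := by
        have : (Radf i - Radf j) x = Radf i x - Radf j x := rfl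
        rcases Radf_eq_or i x with h1 | h1 <;> rcases Radf_eq_or j x with hj1 | hj1 <;>
          first
            | (exact absurd (h1.trans hj1.symm) hx)
            | (rw [this, h1, hj1, ← NNReal.coe_inj]; norm_num [coe_nnnorm, Real.norm_eq_abs])
      rw [h2]
      rw [show ((2 : ℝ≥0) : ℝ≥0∞) = ENNReal.ofReal 2 by norm_num]
      rw [ENNReal.ofReal_rpow_of_nonneg (by norm_num) hq0.le]
    · rw [indicator_of_notMem hx]
      have hx' : Radf i x = Radf j x := not_not.mp hx
      have : (Radf i - Radf j) x = 0 := by simp [Pi.sub_apply, hx', sub_self]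
      rw [this]
      simp [ENNReal.zero_rpow_of_pos hq0]
  rw [hfun, lintegral_indicator hAm, setLIntegral_const, measure_ne_set hij,
    ← ENNReal.ofReal_mul (by positivity)]
  rw [show (2:ℝ) ^ q * (1/2) = 2 ^ (q - 1) from by
    rw [Real.rpow_sub two_pos, Real.rpow_one]; ring]
  rw [ENNReal.ofReal_rpow_of_nonneg (by positivity) (by positivity)]
  rw [← Real.rpow_mul (by norm_num : (0:ℝ) ≤ 2), mul_one_div]

lemma main_bound {X : Type*} [NormedAddCommGroup X] [NormedSpace ℝ X]
    {q α : ℝ} (hα0 : 0 < α) (hq1 : 1 < q)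
    [Fact (1 ≤ ENNReal.ofReal q)]
    {r : ℝ} (hr : 0 < r)
    (x : ℕ → X) (hx1 : ∀ n, ‖x n‖ ≤ 1) (hsep : ∀ n m, n ≠ m → r ≤ ‖x n - x m‖)
    {l : ℝ} (hl0 : 0 ≤ l)
    (hE : ExtProp l α X (Lp ℝ (ENNReal.ofReal q) μ01)) :
    r ^ α ≤ l * 2 ^ ((q - 1) / q) := by
  classical
  set p : ℝ≥0∞ := ENNReal.ofReal q with hp
  have hq0 : (0:ℝ) < q := by linarith
  set c : ℝ := 2 ^ ((q - 1) / q) with hcdef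
  have hc0 : (0:ℝ) < c := Real.rpow_pos_of_pos two_pos _
  have hra : (0:ℝ) < r ^ α := Real.rpow_pos_of_pos hr α
  have hinj : ∀ i j : ℕ, x i = x j → i = j := by
    intro i j hij
    by_contra hne
    have h := hsep i j hne
    rw [hij, sub_self, norm_zero] at h
    linarith
  by_contra hcon
  push_neg at hcon
  obtain ⟨s, hs1, hs2⟩ := exists_between hcon
  have hs0 : 0 < s := lt_of_le_of_lt (mul_nonneg hl0 hc0.le) hs1
  set u : ℝ := s / r ^ α with hu
  have hu0 : 0 < u := div_pos hs0 hra
  have hu1 : u < 1 := (div_lt_one hra).mpr hs2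
  set v : ℝ := u ^ q with hv
  have hv0 : 0 < v := Real.rpow_pos_of_pos hu0 q
  have hv1 : v < 1 := Real.rpow_lt_one hu0.le hu1 hq0
  have h4q : (0:ℝ) < 4 ^ q := Real.rpow_pos_of_pos (by norm_num) q
  set δ : ℝ := (1 - v) / (2 * 4 ^ q) with hδdef
  have hδ0 : 0 < δ := div_pos (by linarith) (by positivity)
  set N : ℕ := ⌈2 / (δ * δ * (1 - v))⌉₊ + 1 with hNdef
  have hN0 : 0 < N := Nat.succ_pos _
  have hNbig : 2 / (δ * δ * (1 - v)) ≤ (N : ℝ) := by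
    refine le_trans (Nat.le_ceil _) ?_
    exact_mod_cast Nat.le_succ _
  have hx4 : 4 ^ q * δ = (1 - v) / 2 := by
    rw [hδdef]; field_simp
  have hyN : 1 / (δ * δ * N) ≤ (1 - v) / 2 := by
    have hNpos : (0:ℝ) < N := by exact_mod_cast hN0
    have h1 : 2 / (1 - v) ≤ δ * δ * N := by
      have h2 := mul_le_mul_of_nonneg_left hNbig (by positivity : (0:ℝ) ≤ δ * δ)
      have hδne : δ ≠ 0 := hδ0.ne'
      have h1v : (1:ℝ) - v ≠ 0 := by linarith
      calc 2 / (1 - v) = δ * δ * (2 / (δ * δ * (1 - v))) := by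
            field_simp
      _ ≤ δ * δ * N := h2
    calc 1 / (δ * δ * N) ≤ 1 / (2 / (1 - v)) := by
          have h1v : (0:ℝ) < 1 - v := by linarith
          apply one_div_le_one_div_of_le (by positivity) h1
    _ = (1 - v) / 2 := one_div_div _ _
  have hy0 : 0 < 1 / (δ * δ * N) := by
    have hNpos : (0:ℝ) < N := by exact_mod_cast hN0
    positivity
  -- Lp elements
  set R : ℕ → Lp ℝ p μ01 := fun n => (memℒp_Radf n p).toLp (Radf n) with hR
  have hRdist : ∀ i j : ℕ, i ≠ j → ‖R i - R j‖ = c := by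
    intro i j hij
    rw [hR]
    simp only
    rw [← MemLp.toLp_sub, Lp.norm_toLp, hp, eLpNorm_Radf_sub hq1 hij,
      ENNReal.toReal_ofReal hc0.le]
  set M : Set X := {y | ∃ i, i < N ∧ x i = y} with hM
  set f : X → Lp ℝ p μ01 :=
    fun y => if h : ∃ i, i < N ∧ x i = y then r ^ α • R h.choose else 0 with hf
  have hfx : ∀ i, i < N → f (x i) = r ^ α • R i := by
    intro i hi
    rw [hf]
    simp only
    have hex : ∃ k, k < N ∧ x k = x i := ⟨i, hi, rfl⟩
    rw [dif_pos hex]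
    have hch : hex.choose = i := hinj _ _ hex.choose_spec.2
    rw [hch]
  have hHol : HolderOnR c α f M := by
    intro y hy z hz
    obtain ⟨i, hi, rfl⟩ := hy
    obtain ⟨j, hj, rfl⟩ := hz
    by_cases hij : i = j
    · subst hij
      simp [sub_self, Real.zero_rpow hα0.ne']
    · rw [hfx i hi, hfx j hj, ← smul_sub, norm_smul, Real.norm_eq_abs, abs_of_pos hra,
        hRdist i j hij]
      have h1 : r ^ α ≤ ‖x i - x j‖ ^ α :=
        Real.rpow_le_rpow hr.le (hsep i j hij) hα0.le
      calc r ^ α * c ≤ ‖x i - x j‖ ^ α * c := mul_le_mul_of_nonneg_right h1 hc0.le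
      _ = c * ‖x i - x j‖ ^ α := mul_comm _ _
  obtain ⟨F, hFeq, K', hK'0, hK'H, hK'le⟩ := hE M f c hc0.le hHol
  have hFx : ∀ i, i < N → F (x i) = r ^ α • R i := fun i hi =>
    (hFeq ⟨i, hi, rfl⟩).trans (hfx i hi)
  have hdist : ∀ i, i < N → ‖F 0 - r ^ α • R i‖ ≤ K' := by
    intro i hi
    rw [← hFx i hi]
    calc ‖F 0 - F (x i)‖ ≤ K' * ‖(0:X) - x i‖ ^ α := hK'H 0 (x i)
    _ ≤ K' * 1 := by
        refine mul_le_mul_of_nonneg_left ?_ hK'0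
        rw [zero_sub, norm_neg]
        exact Real.rpow_le_one (norm_nonneg _) (hx1 i) hα0.le
    _ = K' := mul_one K'
  set Zlp : Lp ℝ p μ01 := (r ^ α)⁻¹ • F 0 with hZlp
  have hZmeas : AEMeasurable (⇑Zlp) μ01 := (Lp.aestronglyMeasurable Zlp).aemeasurable
  obtain ⟨n₀, hn₀, hlow⟩ := naor_lower hq1.le hδ0 hN0 hZmeas
  -- from ENNReal bound to a norm bound
  have hw : v ≤ (1 - 4 ^ q * δ) * (1 - 1 / (δ * δ * N)) := by
    rw [hx4]
    nlinarith [hy0, hyN, hv1]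
  have hG : ENNReal.ofReal v ≤ ENNReal.ofReal (1 - 4 ^ q * δ)
      * (1 - ENNReal.ofReal (1 / (δ * δ * N))) := by
    have h1 : (1 : ℝ≥0∞) - ENNReal.ofReal (1 / (δ * δ * N))
        = ENNReal.ofReal (1 - 1 / (δ * δ * N)) := by
      rw [ENNReal.ofReal_sub _ hy0.le, ENNReal.ofReal_one]
    rw [h1, ← ENNReal.ofReal_mul (by rw [hx4]; linarith)]
    exact ENNReal.ofReal_le_ofReal hw
  have hZRlow : u ≤ ‖Zlp - R n₀‖ := by
    have hae : ⇑(Zlp - R n₀) =ᵐ[μ01] fun x => Zlp x - Radf n₀ x := by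
      filter_upwards [Lp.coeFn_sub Zlp (R n₀), MemLp.coeFn_toLp (memℒp_Radf n₀ p)]
        with x h1 h2
      rw [h1, Pi.sub_apply, h2]
    have hnorm : ‖Zlp - R n₀‖ = (eLpNorm (fun x => Zlp x - Radf n₀ x) p μ01).toReal := by
      rw [Lp.norm_def, eLpNorm_congr_ae hae]
    have hp0 : p ≠ 0 := by simp [hp, ENNReal.ofReal_eq_zero, hq0.not_ge]
    have hptop : p ≠ ∞ := by simp [hp]
    have help : eLpNorm (fun x => Zlp x - Radf n₀ x) p μ01
        = (∫⁻ x, (‖Zlp x - Radf n₀ x‖₊ : ℝ≥0∞) ^ q ∂μ01) ^ (1/q) := by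
      have hpt : p.toReal = q := by rw [hp]; exact ENNReal.toReal_ofReal hq0.le
      rw [eLpNorm_eq_lintegral_rpow_enorm_toReal hp0 hptop, hpt]
      simp only [enorm_eq_nnnorm]
    have hle2 : ENNReal.ofReal u ≤ eLpNorm (fun x => Zlp x - Radf n₀ x) p μ01 := by
      rw [help]
      calc ENNReal.ofReal u = (ENNReal.ofReal v) ^ (1/q) := by
            rw [ENNReal.ofReal_rpow_of_nonneg hv0.le (by positivity), hv,
              ← Real.rpow_mul hu0.le, mul_one_div, div_self hq0.ne', Real.rpow_one]
      _ ≤ (∫⁻ x, (‖Zlp x - Radf n₀ x‖₊ : ℝ≥0∞) ^ q ∂μ01) ^ (1/q) :=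
            ENNReal.rpow_le_rpow (hG.trans hlow) (by positivity)
    have hfin : eLpNorm (fun x => Zlp x - Radf n₀ x) p μ01 ≠ ∞ := by
      rw [← eLpNorm_congr_ae hae]
      exact Lp.eLpNorm_ne_top _
    rw [hnorm]
    calc u = (ENNReal.ofReal u).toReal := (ENNReal.toReal_ofReal hu0.le).symm
    _ ≤ (eLpNorm (fun x => Zlp x - Radf n₀ x) p μ01).toReal :=
          ENNReal.toReal_mono hfin hle2
  have hfinal : s ≤ K' := by
    have h1 : r ^ α * u ≤ r ^ α * ‖Zlp - R n₀‖ :=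
      mul_le_mul_of_nonneg_left hZRlow hra.le
    have h2 : ‖F 0 - r ^ α • R n₀‖ = r ^ α * ‖Zlp - R n₀‖ := by
      have hFeq0 : F 0 - r ^ α • R n₀ = r ^ α • (Zlp - R n₀) := by
        rw [smul_sub, hZlp, smul_inv_smul₀ hra.ne']
      rw [hFeq0, norm_smul, Real.norm_eq_abs, abs_of_pos hra]
    have h3 : r ^ α * u = s := by
      rw [hu]
      field_simp
    rw [h3] at h1
    rw [← h2] at h1
    exact h1.trans (hdist n₀ hn₀)
  have : s ≤ l * c := hfinal.trans hK'le
  linarith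

end Statement15Aux

open Statement15Aux in
/-- For every infinite-dimensional Banach space `X`, `1 < q ≤ 2` and `α ∈ (0,1]`,
`2^{-1/q*} κ(X)^α ≤ λ_α(X, L_q)`, where `q* = q/(q-1)` is the conjugate exponent. -/
theorem statement15 (X : Type*) [NormedAddCommGroup X] [NormedSpace ℝ X] [CompleteSpace X]
    (hX : ¬ FiniteDimensional ℝ X) (α q : ℝ) (hα0 : 0 < α) (hα1 : α ≤ 1)
    (hq1 : 1 < q) (hq2 : q ≤ 2) :
    haveI : Fact (1 ≤ ENNReal.ofReal q) := ⟨ENNReal.one_le_ofReal.mpr hq1.le⟩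
    ENNReal.ofReal ((2 : ℝ) ^ (-(1 / (q / (q - 1)))) * kottman X ^ α) ≤
      holderExt α X
        (MeasureTheory.Lp ℝ (ENNReal.ofReal q)
          (MeasureTheory.volume : MeasureTheory.Measure (Set.Icc (0:ℝ) 1))) := by
  haveI : Fact (1 ≤ ENNReal.ofReal q) := ⟨ENNReal.one_le_ofReal.mpr hq1.le⟩
  have hq0 : (0:ℝ) < q := by linarith
  set c : ℝ := (2:ℝ) ^ ((q - 1) / q) with hc
  have hc0 : (0:ℝ) < c := Real.rpow_pos_of_pos two_pos _
  have hexp : -(1 / (q / (q - 1))) = -((q - 1) / q) := by rw [one_div_div]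
  set S := {r : ℝ | ∃ x : ℕ → X, (∀ n, ‖x n‖ ≤ 1) ∧ ∀ n m, n ≠ m → r ≤ ‖x n - x m‖} with hS
  have h0mem : (0:ℝ) ∈ S := ⟨fun _ => 0, fun n => by simp, fun n m _ => by simp⟩
  have hbdd : BddAbove S := ⟨2, fun r hr => by
    obtain ⟨y, hy1, hy2⟩ := hr
    calc r ≤ ‖y 0 - y 1‖ := hy2 0 1 (by norm_num)
    _ ≤ ‖y 0‖ + ‖y 1‖ := norm_sub_le _ _
    _ ≤ 2 := by linarith [hy1 0, hy1 1]⟩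
  have hκ0 : 0 ≤ kottman X := le_csSup hbdd h0mem
  refine le_sInf fun L hL => ?_
  obtain ⟨l, hl0, rfl, hExt⟩ := hL
  refine ENNReal.ofReal_le_ofReal ?_
  rw [hexp, Real.rpow_neg (by norm_num), inv_mul_le_iff₀ (Real.rpow_pos_of_pos two_pos _)]
  have hmain : ∀ r ∈ S, 0 < r → r ^ α ≤ l * c := by
    intro r hr hr0
    obtain ⟨y, hy1, hy2⟩ := hr
    exact main_bound hα0 hq1 hr0 y hy1 hy2 hl0 hExt
  have hub : kottman X ≤ (l * c) ^ (1/α) := by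
    refine csSup_le ⟨0, h0mem⟩ fun r hr => ?_
    rcases le_or_gt r 0 with h | h
    · exact h.trans (Real.rpow_nonneg (mul_nonneg hl0 hc0.le) _)
    · have h1 : r ^ α ≤ l * c := hmain r hr h
      calc r = (r ^ α) ^ (1/α) := by
            rw [← Real.rpow_mul h.le, mul_one_div, div_self hα0.ne', Real.rpow_one]
      _ ≤ (l * c) ^ (1/α) :=
            Real.rpow_le_rpow (Real.rpow_nonneg h.le _) h1 (by positivity)
  calc kottman X ^ α ≤ ((l * c) ^ (1/α)) ^ α := Real.rpow_le_rpow hκ0 hub hα0.le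
  _ = l * c := by
      rw [← Real.rpow_mul (mul_nonneg hl0 hc0.le), one_div_mul_cancel hα0.ne', Real.rpow_one]
  _ = c * l := mul_comm _ _
end
end
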